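/- arXiv:1603.00343 — 2 statements merged into one kernel-verified Lean document; each statement's English description precedes it below -/
import Mathlib

section
/- The 6×6 real symmetric matrix H with nonzero entries H₁₁ = 1/I₁, H₂₂ = 1/I₂, H₃₃ = 1/I₃, H₁₆ = H₆₁ = −2ω, H₃₄ = H₄₃ = 2ω, H₄₄ = 4(ω²I₂ + 2(I₃−I₂)(k₂−k₃)), H₅₅ = 8(I₃−I₁)(k₁−k₃), H₆₆ = 4(ω²I₂ + 2(I₁−I₂)(k₂−k₁)), where I₁, I₂, I₃ > 0, is positive definite if and only if (I₃−I₁)(k₁−k₃) > 0, (I₂−I₁)(ω² − 2(k₂−k₁)) > 0, and (I₂−I₃)(ω² − 2(k₂−k₃)) > 0. -/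
open Matrix

set_option maxHeartbeats 1000000 in
theorem spacecraft_hessian_posDef_iff
    (I₁ I₂ I₃ ω k₁ k₂ k₃ : ℝ) (hI₁ : 0 < I₁) (hI₂ : 0 < I₂) (hI₃ : 0 < I₃) :
    (!![1/I₁, 0,    0,    0,    0, -2*ω;
        0,    1/I₂, 0,    0,    0, 0;
        0,    0,    1/I₃, 2*ω,  0, 0;
        0,    0,    2*ω,  4*(ω^2*I₂ + 2*(I₃-I₂)*(k₂-k₃)), 0, 0;
        0,    0,    0,    0,    8*(I₃-I₁)*(k₁-k₃), 0;
        -2*ω, 0,    0,    0,    0, 4*(ω^2*I₂ + 2*(I₁-I₂)*(k₂-k₁))] :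
      Matrix (Fin 6) (Fin 6) ℝ).PosDef ↔
    ((I₃-I₁)*(k₁-k₃) > 0 ∧ (I₂-I₁)*(ω^2 - 2*(k₂-k₁)) > 0 ∧
     (I₂-I₃)*(ω^2 - 2*(k₂-k₃)) > 0) := by
  constructor
  · intro h
    rw [posDef_iff_dotProduct_mulVec] at h
    refine ⟨?_, ?_, ?_⟩
    · have := h.2 (x := ![0,0,0,0,1,0]) (by
        intro hc
        have h5 := congrFun hc ((((0:Fin 2).succ).succ).succ).succ
        simp [Matrix.cons_val_succ] at h5)
      simp only [dotProduct, Pi.star_apply, star_trivial, mulVec, Fin.sum_univ_succ,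
        Fin.sum_univ_zero, Matrix.cons_val_zero, Matrix.cons_val_succ, Matrix.of_apply,
        add_zero, zero_mul, mul_zero, zero_add, one_mul, mul_one] at this
      linarith
    · have := h.2 (x := ![2*ω*I₁,0,0,0,0,1]) (by
        intro hc
        have h5 := congrFun hc (((((0:Fin 1).succ).succ).succ).succ).succ
        simp [Matrix.cons_val_succ] at h5)
      simp only [dotProduct, Pi.star_apply, star_trivial, mulVec, Fin.sum_univ_succ,
        Fin.sum_univ_zero, Matrix.cons_val_zero, Matrix.cons_val_succ, Matrix.of_apply,
        add_zero, zero_mul, mul_zero, zero_add, one_mul, mul_one] at this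
      have h4 : 2*ω*I₁ * (1/I₁ * (2*ω*I₁) + -2*ω*1) + (-2*ω*(2*ω*I₁) + 4*(ω^2*I₂ + 2*(I₁-I₂)*(k₂-k₁)))
          = 4*((I₂-I₁)*(ω^2 - 2*(k₂-k₁))) := by
        field_simp
        ring
      nlinarith [this]
    · have := h.2 (x := ![0,0,-2*ω*I₃,1,0,0]) (by
        intro hc
        have h5 := congrFun hc ((((0:Fin 3).succ).succ).succ)
        simp [Matrix.cons_val_succ] at h5)
      simp only [dotProduct, Pi.star_apply, star_trivial, mulVec, Fin.sum_univ_succ,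
        Fin.sum_univ_zero, Matrix.cons_val_zero, Matrix.cons_val_succ, Matrix.of_apply,
        add_zero, zero_mul, mul_zero, zero_add, one_mul, mul_one] at this
      have h4 : -2*ω*I₃ * (1/I₃ * (-2*ω*I₃) + 2*ω*1) + (2*ω*(-2*ω*I₃) + 4*(ω^2*I₂ + 2*(I₃-I₂)*(k₂-k₃)))
          = 4*((I₂-I₃)*(ω^2 - 2*(k₂-k₃))) := by
        field_simp
        ring
      nlinarith [this]
  · rintro ⟨h1, h2, h3⟩
    rw [posDef_iff_dotProduct_mulVec]
    constructor
    · ext i j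
      fin_cases i <;> fin_cases j <;> rfl
    · intro x hx
      simp only [dotProduct, Pi.star_apply, star_trivial, mulVec, Fin.sum_univ_succ,
        Fin.sum_univ_zero, Matrix.cons_val_zero, Matrix.cons_val_succ, Matrix.of_apply,
        add_zero, zero_mul, mul_zero, zero_add, one_mul, mul_one]
      show 0 < x 0 * (1 / I₁ * x 0 + -2 * ω * x 5) +
          (x 1 * (1 / I₂ * x 1) +
            (x 2 * (1 / I₃ * x 2 + 2 * ω * x 3) +
              (x 3 * (2 * ω * x 2 + 4 * (ω ^ 2 * I₂ + 2 * (I₃ - I₂) * (k₂ - k₃)) * x 3) +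
                (x 4 * (8 * (I₃ - I₁) * (k₁ - k₃) * x 4) +
                  x 5 * (-2 * ω * x 0 + 4 * (ω ^ 2 * I₂ + 2 * (I₁ - I₂) * (k₂ - k₁)) * x 5)))))
      set x0 := x 0; set x1 := x 1; set x2 := x 2; set x3 := x 3; set x4 := x 4; set x5 := x 5
      have key : x0 * (1 / I₁ * x0 + -2 * ω * x5) +
          (x1 * (1 / I₂ * x1) +
            (x2 * (1 / I₃ * x2 + 2 * ω * x3) +
              (x3 * (2 * ω * x2 + 4 * (ω ^ 2 * I₂ + 2 * (I₃ - I₂) * (k₂ - k₃)) * x3) +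
                (x4 * (8 * (I₃ - I₁) * (k₁ - k₃) * x4) +
                  x5 * (-2 * ω * x0 + 4 * (ω ^ 2 * I₂ + 2 * (I₁ - I₂) * (k₂ - k₁)) * x5)))))
          = (1/I₁) * (x0 - 2*ω*I₁*x5)^2 + (1/I₂) * x1^2 + (1/I₃) * (x2 + 2*ω*I₃*x3)^2 +
            4*((I₂-I₃)*(ω^2 - 2*(k₂-k₃))) * x3^2 + 8*((I₃-I₁)*(k₁-k₃)) * x4^2 +
            4*((I₂-I₁)*(ω^2 - 2*(k₂-k₁))) * x5^2 := by
        field_simp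
        ring
      rw [key]
      have t1 : 0 ≤ (1/I₁) * (x0 - 2*ω*I₁*x5)^2 := by positivity
      have t2 : 0 ≤ (1/I₂) * x1^2 := by positivity
      have t3 : 0 ≤ (1/I₃) * (x2 + 2*ω*I₃*x3)^2 := by positivity
      have t4 : 0 ≤ 4*((I₂-I₃)*(ω^2 - 2*(k₂-k₃))) * x3^2 := by positivity
      have t5 : 0 ≤ 8*((I₃-I₁)*(k₁-k₃)) * x4^2 := by positivity
      have t6 : 0 ≤ 4*((I₂-I₁)*(ω^2 - 2*(k₂-k₁))) * x5^2 := by positivity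
      obtain ⟨i, hi⟩ := Function.ne_iff.mp hx
      fin_cases i <;> simp only [Pi.zero_apply] at hi
      · by_cases h5 : x5 = 0
        · have : 0 < (1/I₁) * (x0 - 2*ω*I₁*x5)^2 := by
            have hne : x0 - 2*ω*I₁*x5 ≠ 0 := by rw [h5]; simpa using hi
            positivity
          linarith
        · have : 0 < 4*((I₂-I₁)*(ω^2 - 2*(k₂-k₁))) * x5^2 := by positivity
          linarith
      · have : 0 < (1/I₂) * x1^2 := by
          have hne : x1 ≠ 0 := hi
          positivity
        linarith
      · by_cases h5 : x3 = 0
        · have : 0 < (1/I₃) * (x2 + 2*ω*I₃*x3)^2 := by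
            have hne : x2 + 2*ω*I₃*x3 ≠ 0 := by rw [h5]; simpa using hi
            positivity
          linarith
        · have : 0 < 4*((I₂-I₃)*(ω^2 - 2*(k₂-k₃))) * x3^2 := by positivity
          linarith
      · have : 0 < 4*((I₂-I₃)*(ω^2 - 2*(k₂-k₃))) * x3^2 := by
          have hne : x3 ≠ 0 := hi
          positivity
        linarith
      · have : 0 < 8*((I₃-I₁)*(k₁-k₃)) * x4^2 := by
          have hne : x4 ≠ 0 := hi
          positivity
        linarith
      · have : 0 < 4*((I₂-I₁)*(ω^2 - 2*(k₂-k₁))) * x5^2 := by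
          have hne : x5 ≠ 0 := hi
          positivity
        linarith
end

section
/- Let m, l, m₁, m₂, I₁₁, I₁₂, I₂₂, I₃, m₃ be real numbers with m₁, m₂, m₃, I₃ > 0, I₁₁ > 0, I₂₂ > 0, I₁₁I₂₂ − I₁₂² > 0. Define the 6×6 block matrix N = [[J, D],[Dᵀ, M]] where M = diag(m₁, m₂, m₃), J = [[I₁₁, I₁₂, 0],[I₁₂, I₂₂, 0],[0,0,I₃]], and D = [[0, −ml, 0],[ml, 0, 0],[0,0,0]]. Then N is positive definite if and only if m₁I₂₂ > m²l², m₂I₁₁ > m²l², and k := m₁m₂(I₁₁I₂₂ − I₁₂²) − m²l²(m₁I₂₂ + m₂I₁₁) + m⁴l⁴ > 0. -/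
open Matrix

private lemma aux_pos (m l m₁ m₂ m₃ I₁₁ I₁₂ I₂₂ I₃ : ℝ)
    (hm₁ : 0 < m₁) (hm₂ : 0 < m₂) (hm₃ : 0 < m₃) (hI₃ : 0 < I₃)
    (ha : 0 < m₂*I₁₁ - m^2*l^2)
    (hk : 0 < m₁*m₂*(I₁₁*I₂₂ - I₁₂^2) - m^2*l^2*(m₁*I₂₂ + m₂*I₁₁) + m^4*l^4)
    (w1 w2 w3 u1 u2 u3 : ℝ)
    (hne : w1 ≠ 0 ∨ w2 ≠ 0 ∨ w3 ≠ 0 ∨ u1 ≠ 0 ∨ u2 ≠ 0 ∨ u3 ≠ 0) :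
    0 < I₁₁*w1^2 + 2*I₁₂*w1*w2 + I₂₂*w2^2 + I₃*w3^2
      + m₁*u1^2 + m₂*u2^2 + m₃*u3^2 + 2*m*l*(w2*u1 - w1*u2) := by
  set a : ℝ := m₂*I₁₁ - m^2*l^2 with ha_def
  set k : ℝ := m₁*m₂*(I₁₁*I₂₂ - I₁₂^2) - m^2*l^2*(m₁*I₂₂ + m₂*I₁₁) + m^4*l^4 with hk_def
  set Q : ℝ := I₁₁*w1^2 + 2*I₁₂*w1*w2 + I₂₂*w2^2 + I₃*w3^2
      + m₁*u1^2 + m₂*u2^2 + m₃*u3^2 + 2*m*l*(w2*u1 - w1*u2) with hQ_def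
  have hiden : m₁*m₂*a*Q =
      m₁*m₂*a*I₃*w3^2 + m₁*m₂*a*m₃*u3^2
      + m₂*a*(m₁*u1 + m*l*w2)^2 + m₁*a*(m₂*u2 - m*l*w1)^2
      + m₁*(a*w1 + m₂*I₁₂*w2)^2 + m₂*k*w2^2 := by
    rw [hQ_def, ha_def, hk_def]; ring
  have hc : 0 < m₁*m₂*a := by positivity
  have t1 : 0 ≤ m₁*m₂*a*I₃*w3^2 := by positivity
  have t2 : 0 ≤ m₁*m₂*a*m₃*u3^2 := by positivity
  have t3 : 0 ≤ m₂*a*(m₁*u1 + m*l*w2)^2 := by positivity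
  have t4 : 0 ≤ m₁*a*(m₂*u2 - m*l*w1)^2 := by positivity
  have t5 : 0 ≤ m₁*(a*w1 + m₂*I₁₂*w2)^2 := by positivity
  have t6 : 0 ≤ m₂*k*w2^2 := by positivity
  have key : 0 < m₁*m₂*a*Q := by
    by_cases hw2 : w2 = 0
    · subst hw2
      by_cases hw1 : w1 = 0
      · subst hw1
        rcases hne with h|h|h|h|h|h
        · exact absurd rfl h
        · exact absurd rfl h
        · have : 0 < m₁*m₂*a*I₃*w3^2 := by
            have := lt_of_le_of_ne (sq_nonneg w3) (Ne.symm (pow_ne_zero 2 h))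
            positivity
          rw [hiden]; linarith
        · have : 0 < m₂*a*(m₁*u1 + m*l*0)^2 := by
            have h' : m₁*u1 + m*l*0 ≠ 0 := by
              simpa using mul_ne_zero (ne_of_gt hm₁) h
            have := lt_of_le_of_ne (sq_nonneg (m₁*u1 + m*l*0)) (Ne.symm (pow_ne_zero 2 h'))
            positivity
          rw [hiden]; linarith
        · have : 0 < m₁*a*(m₂*u2 - m*l*0)^2 := by
            have h' : m₂*u2 - m*l*0 ≠ 0 := by
              simpa using mul_ne_zero (ne_of_gt hm₂) h
            have := lt_of_le_of_ne (sq_nonneg (m₂*u2 - m*l*0)) (Ne.symm (pow_ne_zero 2 h'))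
            positivity
          rw [hiden]; linarith
        · have : 0 < m₁*m₂*a*m₃*u3^2 := by
            have := lt_of_le_of_ne (sq_nonneg u3) (Ne.symm (pow_ne_zero 2 h))
            positivity
          rw [hiden]; linarith
      · have : 0 < m₁*(a*w1 + m₂*I₁₂*0)^2 := by
          have h' : a*w1 + m₂*I₁₂*0 ≠ 0 := by
            simpa using mul_ne_zero (ne_of_gt ha) hw1
          have := lt_of_le_of_ne (sq_nonneg (a*w1 + m₂*I₁₂*0)) (Ne.symm (pow_ne_zero 2 h'))
          positivity
        rw [hiden]; linarith
    · have : 0 < m₂*k*w2^2 := by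
        have := lt_of_le_of_ne (sq_nonneg w2) (Ne.symm (pow_ne_zero 2 hw2))
        positivity
      rw [hiden]; linarith
  nlinarith [key, hc]

theorem inertia_matrix_posDef_iff
    (m l m₁ m₂ m₃ I₁₁ I₁₂ I₂₂ I₃ : ℝ)
    (hm₁ : 0 < m₁) (hm₂ : 0 < m₂) (hm₃ : 0 < m₃) (hI₃ : 0 < I₃)
    (hI₁₁ : 0 < I₁₁) (hI₂₂ : 0 < I₂₂) (hdet : I₁₁*I₂₂ - I₁₂^2 > 0) :
    (Matrix.fromBlocks
        (!![I₁₁, I₁₂, 0; I₁₂, I₂₂, 0; 0, 0, I₃])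
        (!![0, -m*l, 0; m*l, 0, 0; 0, 0, 0])
        (!![0, -m*l, 0; m*l, 0, 0; 0, 0, 0])ᵀ
        (!![m₁, 0, 0; 0, m₂, 0; 0, 0, m₃])).PosDef ↔
      (m₁*I₂₂ > m^2*l^2 ∧ m₂*I₁₁ > m^2*l^2 ∧
       m₁*m₂*(I₁₁*I₂₂ - I₁₂^2) - m^2*l^2*(m₁*I₂₂ + m₂*I₁₁) + m^4*l^4 > 0) := by
  set N := (Matrix.fromBlocks
        (!![I₁₁, I₁₂, 0; I₁₂, I₂₂, 0; 0, 0, I₃])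
        (!![0, -m*l, 0; m*l, 0, 0; 0, 0, 0])
        (!![0, -m*l, 0; m*l, 0, 0; 0, 0, 0])ᵀ
        (!![m₁, 0, 0; 0, m₂, 0; 0, 0, m₃])) with hN
  have hQ : ∀ w u : Fin 3 → ℝ,
      dotProduct (star (Sum.elim w u)) (N *ᵥ (Sum.elim w u)) =
      I₁₁*(w 0)^2 + 2*I₁₂*(w 0)*(w 1) + I₂₂*(w 1)^2 + I₃*(w 2)^2
        + m₁*(u 0)^2 + m₂*(u 1)^2 + m₃*(u 2)^2
        + 2*m*l*((w 1)*(u 0) - (w 0)*(u 1)) := by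
    intro w u
    rw [hN]
    simp [dotProduct, mulVec, Fintype.sum_sum_type, Fin.sum_univ_succ, Matrix.fromBlocks,
      Matrix.transpose_apply, Matrix.vecHead, Matrix.vecTail]
    ring
  constructor
  · rw [Matrix.posDef_iff_dotProduct_mulVec]
    rintro ⟨-, hq⟩
    have key : ∀ w1 w2 w3 u1 u2 u3 : ℝ,
        (w1 ≠ 0 ∨ w2 ≠ 0 ∨ w3 ≠ 0 ∨ u1 ≠ 0 ∨ u2 ≠ 0 ∨ u3 ≠ 0) →
        0 < I₁₁*w1^2 + 2*I₁₂*w1*w2 + I₂₂*w2^2 + I₃*w3^2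
          + m₁*u1^2 + m₂*u2^2 + m₃*u3^2 + 2*m*l*(w2*u1 - w1*u2) := by
      intro w1 w2 w3 u1 u2 u3 hne
      have hx : (Sum.elim ![w1,w2,w3] ![u1,u2,u3] : Fin 3 ⊕ Fin 3 → ℝ) ≠ 0 := by
        intro h0
        rcases hne with h|h|h|h|h|h
        · exact h (by simpa using congrFun h0 (Sum.inl 0))
        · exact h (by simpa using congrFun h0 (Sum.inl 1))
        · exact h (by simpa using congrFun h0 (Sum.inl 2))
        · exact h (by simpa using congrFun h0 (Sum.inr 0))
        · exact h (by simpa using congrFun h0 (Sum.inr 1))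
        · exact h (by simpa using congrFun h0 (Sum.inr 2))
      have := hq hx
      rw [hQ ![w1,w2,w3] ![u1,u2,u3]] at this
      simpa using this
    have h2 : m₂*I₁₁ > m^2*l^2 := by
      have h := key m₂ 0 0 0 (m*l) 0 (Or.inl (ne_of_gt hm₂))
      nlinarith
    have h1 : m₁*I₂₂ > m^2*l^2 := by
      have h := key 0 m₁ 0 (-(m*l)) 0 0 (Or.inr (Or.inl (ne_of_gt hm₁)))
      nlinarith
    refine ⟨h1, h2, ?_⟩
    have ha : 0 < m₂*I₁₁ - m^2*l^2 := by linarith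
    have h := key (m₁*m₂*I₁₂) (-(m₁*(m₂*I₁₁ - m^2*l^2))) 0
        (m*l*(m₂*I₁₁ - m^2*l^2)) (m₁*(m*l)*I₁₂) 0
        (Or.inr (Or.inl (by simpa using ⟨ne_of_gt hm₁, ne_of_gt ha⟩)))
    -- Q = m₁ * a * k
    nlinarith [mul_pos hm₁ ha, sq_nonneg (m*l), h]
  · rintro ⟨h1, h2, h3⟩
    rw [Matrix.posDef_iff_dotProduct_mulVec]
    constructor
    · show _ = _
      rw [hN]
      ext (i|i) (j|j) <;> fin_cases i <;> fin_cases j <;>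
        simp [Matrix.fromBlocks, Matrix.conjTranspose_apply, Matrix.transpose_apply,
          Matrix.vecHead, Matrix.vecTail]
    · intro x hx
      rw [← Sum.elim_comp_inl_inr x, hQ]
      have hne : (x ∘ Sum.inl) 0 ≠ 0 ∨ (x ∘ Sum.inl) 1 ≠ 0 ∨ (x ∘ Sum.inl) 2 ≠ 0 ∨
          (x ∘ Sum.inr) 0 ≠ 0 ∨ (x ∘ Sum.inr) 1 ≠ 0 ∨ (x ∘ Sum.inr) 2 ≠ 0 := by
        by_contra hcon
        push_neg at hcon
        obtain ⟨a1, a2, a3, b1, b2, b3⟩ := hcon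
        apply hx
        funext i
        rcases i with i | i <;> fin_cases i <;> assumption
      exact aux_pos m l m₁ m₂ m₃ I₁₁ I₁₂ I₂₂ I₃ hm₁ hm₂ hm₃ hI₃
        (by linarith) h3 _ _ _ _ _ _ hne
end
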